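/- Let P : A → X be an order-enriched functor, ξ : PD → X a W-weighted colimit of P∘D in X, and α : D → A a W-weighted colimit of D in A. Then (α, A, q), where q : X → PA is the comparison morphism induced by the colimit property of ξ applied to Pα, is an order-universal P-extension of ξ. -/

import Mathlib

open CategoryTheory Opposite

universe w v₂ u₂ v u v' u'

/-- A `W`-weighted cocone over an order-enriched diagram `F : D ⥤ C` with weight
`W : Dᵒᵖ ⥤ Pos`: a natural transformation `W ⟶ C(F -, pt)`. -/
structure WeightedCocone {C : Type u} [Category.{v} C] [∀ a b : C, PartialOrder (a ⟶ b)]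
    {D : Type u₂} [Category.{v₂} D] (W : Dᵒᵖ ⥤ PartOrd.{w}) (F : D ⥤ C) where
  pt : C
  leg : ∀ i : D, W.obj (op i) → (F.obj i ⟶ pt)
  leg_mono : ∀ i : D, Monotone (leg i)
  leg_nat : ∀ {i j : D} (d : i ⟶ j) (v : W.obj (op j)),
    F.map d ≫ leg j v = leg i ((W.map d.op).hom.toFun v)

/-- A weighted cocone is a weighted colimit if it is universal among weighted cocones
and order-epic. -/
def IsWeightedColimit {C : Type u} [Category.{v} C] [∀ a b : C, PartialOrder (a ⟶ b)]
    {D : Type u₂} [Category.{v₂} D] {W : Dᵒᵖ ⥤ PartOrd.{w}} {F : D ⥤ C}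
    (α : WeightedCocone W F) : Prop :=
  (∀ β : WeightedCocone W F, ∃! t : α.pt ⟶ β.pt, ∀ (i : D) (u : W.obj (op i)),
    α.leg i u ≫ t = β.leg i u) ∧
  (∀ {z : C} (r s : α.pt ⟶ z),
    (∀ (i : D) (u : W.obj (op i)), α.leg i u ≫ r ≤ α.leg i u ≫ s) → r ≤ s)

/-- `(α, q)` is an order-universal `P`-extension of the weighted cocone `ξ` over `F ⋙ P`. -/
def IsOrderUniversalExtension {A : Type u} [Category.{v} A] [∀ a b : A, PartialOrder (a ⟶ b)]
    {X : Type u'} [Category.{v'} X] [∀ x y : X, PartialOrder (x ⟶ y)]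
    (P : A ⥤ X) {D : Type u₂} [Category.{v₂} D] {W : Dᵒᵖ ⥤ PartOrd.{w}} {F : D ⥤ A}
    (ξ : WeightedCocone W (F ⋙ P)) (α : WeightedCocone W F)
    (q : ξ.pt ⟶ P.obj α.pt) : Prop :=
  (∀ (i : D) (u : W.obj (op i)), P.map (α.leg i u) = ξ.leg i u ≫ q) ∧
  (∀ (β : WeightedCocone W F) (f : ξ.pt ⟶ P.obj β.pt),
    (∀ (i : D) (u : W.obj (op i)), P.map (β.leg i u) = ξ.leg i u ≫ f) →
    ∃! t : α.pt ⟶ β.pt,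
      (∀ (i : D) (u : W.obj (op i)), α.leg i u ≫ t = β.leg i u) ∧ q ≫ P.map t = f) ∧
  (∀ {z : A} (r s : α.pt ⟶ z), q ≫ P.map r ≤ q ≫ P.map s →
    (∀ (i : D) (u : W.obj (op i)), α.leg i u ≫ r ≤ α.leg i u ≫ s) → r ≤ s)

/-- If `ξ` is a `W`-weighted colimit of `F ⋙ P` and `α` is a `W`-weighted colimit of `F`,
then `α` together with the comparison morphism `q` induced by the colimit property of `ξ`
(characterized by `P (α.leg i u) = ξ.leg i u ≫ q`) is an order-universal `P`-extension
of `ξ`. -/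
theorem orderUniversalExtension_of_isWeightedColimit
    {A : Type u} [Category.{v} A] [∀ a b : A, PartialOrder (a ⟶ b)]
    {X : Type u'} [Category.{v'} X] [∀ x y : X, PartialOrder (x ⟶ y)]
    (compMonoA : ∀ {a b c : A} (f f' : a ⟶ b) (g g' : b ⟶ c),
      f ≤ f' → g ≤ g' → f ≫ g ≤ f' ≫ g')
    (compMonoX : ∀ {x y z : X} (f f' : x ⟶ y) (g g' : y ⟶ z),
      f ≤ f' → g ≤ g' → f ≫ g ≤ f' ≫ g')
    (P : A ⥤ X)
    (Pmono : ∀ {a b : A} (f g : a ⟶ b), f ≤ g → P.map f ≤ P.map g)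
    {D : Type u₂} [Category.{v₂} D] {W : Dᵒᵖ ⥤ PartOrd.{w}} {F : D ⥤ A}
    (ξ : WeightedCocone W (F ⋙ P)) (hξ : IsWeightedColimit ξ)
    (α : WeightedCocone W F) (hα : IsWeightedColimit α)
    (q : ξ.pt ⟶ P.obj α.pt)
    (hq : ∀ (i : D) (u : W.obj (op i)), P.map (α.leg i u) = ξ.leg i u ≫ q) :
    IsOrderUniversalExtension P ξ α q := by
  refine ⟨hq, ?_, ?_⟩
  · intro β f hf
    obtain ⟨t, ht, htu⟩ := hα.1 β
    refine ⟨t, ⟨ht, ?_⟩, fun t' ht' => htu t' ht'.1⟩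
    have h1 : ∀ (i : D) (u : W.obj (op i)),
        ξ.leg i u ≫ (q ≫ P.map t) = ξ.leg i u ≫ f := by
      intro i u
      rw [← Category.assoc, ← hq, ← hf, ← P.map_comp, ht]
    exact le_antisymm (hξ.2 _ _ fun i u => (h1 i u).le)
      (hξ.2 _ _ fun i u => (h1 i u).ge)
  · intro z r s _ hleg
    exact hα.2 r s hleg
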